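/- Let c, d ≥ 2 be integers, let k ≤ 0 be an integer, and set g = gcd(c-1, d-1). Then D_loop(c, d, k) - 1 = g · (D_F((c-1)/g, (d-1)/g, k) + 1). -/

import Mathlib

/-- `D_F(e,f,k)`: the rank of `SH^{2k}` of the Milnor fiber of the Fermat-type
singularity `x₁²+x₂²+x₃^e+x₄^f`, where `q` is the unique integer with
`0 ≤ q < e+f` and `min(e,f)·(1-k) ≡ q (mod e+f)`. -/
def DFermat (e f k : ℤ) : ℤ :=
  let q := (min e f * (1 - k)) % (e + f)
  if q = 0 then (Int.gcd e f : ℤ) - 1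
  else if q ≤ min e f then q - 1
  else if q ≤ max e f then min e f - 1
  else e + f - q - 1

/-- `D_loop(c,d,k)`: the rank of `SH^{2k}` of the Milnor fiber of the loop-type
singularity `x₁²+x₂²+x₃^c x₄+x₃ x₄^d`, where `q` is the unique integer with
`0 ≤ q < c+d-2` and `min(c-1,d-1)·(1-k) ≡ q (mod c+d-2)`. -/
def Dloop (c d k : ℤ) : ℤ :=
  let q := (min (c - 1) (d - 1) * (1 - k)) % (c + d - 2)
  if q = 0 then (Int.gcd (c - 1) (d - 1) : ℤ) + 1
  else if q ≤ min c d - 1 then q + 1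
  else if q ≤ max c d - 1 then min c d
  else (c + d - 2) - q + 1

/-- Proposition 4.17 (ii): `D_loop(c,d,k) - 1 = g·(D_F((c-1)/g, (d-1)/g, k) + 1)`
where `g = gcd(c-1,d-1)`. -/
theorem Dloop_sub_one_eq_gcd_mul_DFermat (c d k : ℤ) (hc : 2 ≤ c) (hd : 2 ≤ d) (hk : k ≤ 0) :
    Dloop c d k - 1 =
      (Int.gcd (c - 1) (d - 1) : ℤ) *
        (DFermat ((c - 1) / (Int.gcd (c - 1) (d - 1) : ℤ))
          ((d - 1) / (Int.gcd (c - 1) (d - 1) : ℤ)) k + 1) := by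
  have hc1 : (1:ℤ) ≤ c - 1 := by omega
  have hd1 : (1:ℤ) ≤ d - 1 := by omega
  set g : ℤ := (Int.gcd (c - 1) (d - 1) : ℤ) with hg
  have hgpos : 0 < g := by
    have h := Int.gcd_pos_of_ne_zero_left (d - 1) (show c - 1 ≠ 0 by omega)
    rw [hg]; exact_mod_cast h
  set e : ℤ := (c - 1) / g with he
  set f : ℤ := (d - 1) / g with hf
  have hge : g * e = c - 1 := Int.mul_ediv_cancel' (Int.gcd_dvd_left _ _)
  have hgf : g * f = d - 1 := Int.mul_ediv_cancel' (Int.gcd_dvd_right _ _)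
  have hgef : (Int.gcd e f : ℤ) = 1 := by
    have hgpos' : 0 < Int.gcd (c - 1) (d - 1) := by
      rw [hg] at hgpos; exact_mod_cast hgpos
    have := Int.gcd_div_gcd_div_gcd (i := c - 1) (j := d - 1) hgpos'
    rw [he, hf, hg]; exact_mod_cast this
  have he1 : 1 ≤ e := by nlinarith
  have hf1 : 1 ≤ f := by nlinarith
  have hmin : min (c - 1) (d - 1) = g * min e f := by
    rcases le_total e f with h | h
    · rw [min_eq_left h, min_eq_left (by nlinarith), hge]
    · rw [min_eq_right h, min_eq_right (by nlinarith), hgf]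
  have hmax : max (c - 1) (d - 1) = g * max e f := by
    rcases le_total e f with h | h
    · rw [max_eq_right h, max_eq_right (by nlinarith), hgf]
    · rw [max_eq_left h, max_eq_left (by nlinarith), hge]
  have hsum : c + d - 2 = g * (e + f) := by rw [mul_add, hge, hgf]; ring
  have hmincd : min c d - 1 = g * min e f := by rw [← hmin]; omega
  have hmaxcd : max c d - 1 = g * max e f := by rw [← hmax]; omega
  rw [Dloop, DFermat]
  simp only [hmin, hsum, mul_assoc, Int.mul_emod_mul_of_pos _ _ hgpos]
  set q : ℤ := min e f * (1 - k) % (e + f) with hq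
  have hq0 : 0 ≤ q := Int.emod_nonneg _ (by positivity)
  have hqlt : q < e + f := Int.emod_lt_of_pos _ (by positivity)
  by_cases h0 : q = 0
  · rw [if_pos (by rw [h0]; ring), if_pos h0, hgef]; ring
  · have hgq0 : g * q ≠ 0 := by
      intro h
      rcases mul_eq_zero.1 h with h | h
      · omega
      · exact h0 h
    rw [if_neg hgq0, if_neg h0]
    by_cases h1 : q ≤ min e f
    · rw [if_pos (by rw [hmincd]; exact mul_le_mul_of_nonneg_left h1 hgpos.le),
        if_pos h1]
      ring
    · have hn1 : ¬ g * q ≤ c ⊓ d - 1 := by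
        rw [hmincd]; push_neg; push_neg at h1
        exact mul_lt_mul_of_pos_left h1 hgpos
      rw [if_neg hn1, if_neg h1]
      by_cases h2 : q ≤ max e f
      · rw [if_pos (by rw [hmaxcd]; exact mul_le_mul_of_nonneg_left h2 hgpos.le),
          if_pos h2]
        rw [show min c d = g * min e f + 1 from by omega]; ring
      · have hn2 : ¬ g * q ≤ c ⊔ d - 1 := by
          rw [hmaxcd]; push_neg; push_neg at h2
          exact mul_lt_mul_of_pos_left h2 hgpos
        rw [if_neg hn2, if_neg h2]
        ring
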